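/- Let g, h ∈ K{{x,y} with ord_x(g) ≥ 1. Then there exists a unique map φ : K{{x,y} → K{{x,y} which is K-linear, commutes with every grafting operation •_m (m ≥ 2), maps 1_P to 1_P, satisfies φ(x) = g and φ(y) = h, and is continuous with respect to the x-adic topology. This φ is called the substitution homomorphism φ_{(g,h)} induced by (g,h). -/

import Mathlib

namespace Planar

inductive PVar : Type
  | vx : PVar
  | vy : PVar
deriving DecidableEq

/-- A finite planar reduced rooted tree: every internal vertex has at least two
(ordered) children, encoded as `node t₁ t₂ rest` with children list `t₁ :: t₂ :: rest`;
leaves are labeled by a variable (an isomorphism class of such a labeled tree is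
faithfully represented by this inductive data). -/
inductive PTree : Type
  | leaf : PVar → PTree
  | node : PTree → PTree → List PTree → PTree

namespace PTree

/-- The number of leaves carrying the label `v`. -/
def countLeaf (v : PVar) : PTree → ℕ
  | .leaf w => if w = v then 1 else 0
  | .node t1 t2 rest =>
      countLeaf v t1 + countLeaf v t2 + (rest.attach.map fun t => countLeaf v t.1).sum
decreasing_by
  all_goals simp_wf
  · omega
  · omega
  · have := List.sizeOf_lt_of_mem t.2
    omega

end PTree

/-- `P'(x,y)`: planar monomials plus the empty tree `1_P` (= `none`). -/
abbrev PT := Option PTree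

/-- `deg_x`: the number of leaves labeled `x`. -/
def degx (S : PT) : ℕ := S.elim 0 (PTree.countLeaf .vx)

/-- `deg_y`: the number of leaves labeled `y`. -/
def degy (S : PT) : ℕ := S.elim 0 (PTree.countLeaf .vy)

/-- `m`-ary grafting `•_m` on `P'(x,y)` (`m = l.length`): join the non-trivial entries
at a new root; the conventions `•_m(1_P,…,1_P) = 1_P`, dropping of `1_P`-entries and
`•_2(S,1_P) = •_2(1_P,S) = S` amount to discarding the `1_P`-entries first. -/
def graft (l : List PT) : PT :=
  match l.reduceOption with
  | [] => none
  | [t] => some t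
  | t1 :: t2 :: ts => some (.node t1 t2 ts)

variable (K : Type) [Field K]

/-- The algebra `K{{x,y}` of planar power series in `x` and polynomials in `y`:
functions on `P'(x,y)` such that for every `n` only finitely many monomials of
`x`-degree `n` have a nonzero coefficient. -/
def PSer : Type := {f : PT → K // ∀ n : ℕ, {S : PT | f S ≠ 0 ∧ degx S = n}.Finite}

variable {K}

namespace PSer

private lemma finite_add (f g : PSer K) (n : ℕ) :
    {S : PT | f.1 S + g.1 S ≠ 0 ∧ degx S = n}.Finite := by
  apply ((f.2 n).union (g.2 n)).subset
  rintro S ⟨hne, hdeg⟩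
  by_cases h1 : f.1 S = 0
  · exact Or.inr ⟨by simpa [h1] using hne, hdeg⟩
  · exact Or.inl ⟨h1, hdeg⟩

private lemma finite_neg (f : PSer K) (n : ℕ) :
    {S : PT | -f.1 S ≠ 0 ∧ degx S = n}.Finite := by
  apply (f.2 n).subset
  rintro S ⟨hne, hdeg⟩
  exact ⟨by simpa using hne, hdeg⟩

private lemma finite_zero (n : ℕ) :
    {S : PT | (0 : K) ≠ 0 ∧ degx S = n}.Finite := by
  convert Set.finite_empty using 1
  ext S; simp

private lemma finite_smul (a : K) (f : PSer K) (n : ℕ) :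
    {S : PT | a * f.1 S ≠ 0 ∧ degx S = n}.Finite := by
  apply (f.2 n).subset
  rintro S ⟨hne, hdeg⟩
  exact ⟨fun h => hne (by simp [h]), hdeg⟩

noncomputable instance : AddCommGroup (PSer K) where
  add f g := ⟨fun S => f.1 S + g.1 S, finite_add f g⟩
  zero := ⟨fun _ => 0, finite_zero⟩
  neg f := ⟨fun S => -f.1 S, finite_neg f⟩
  add_assoc f g h := Subtype.ext (funext fun S => add_assoc _ _ _)
  add_comm f g := Subtype.ext (funext fun S => add_comm _ _)
  zero_add f := Subtype.ext (funext fun S => zero_add _)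
  add_zero f := Subtype.ext (funext fun S => add_zero _)
  neg_add_cancel f := Subtype.ext (funext fun S => neg_add_cancel _)
  nsmul n f := ⟨fun S => (n : K) * f.1 S, finite_smul _ f⟩
  nsmul_zero f := Subtype.ext (funext fun S => by
    show ((0 : ℕ) : K) * f.1 S = (0 : K); simp)
  nsmul_succ n f := Subtype.ext (funext fun S => by
    show ((n + 1 : ℕ) : K) * f.1 S = (n : K) * f.1 S + f.1 S; push_cast; ring)
  zsmul n f := ⟨fun S => (n : K) * f.1 S, finite_smul _ f⟩
  zsmul_zero' f := Subtype.ext (funext fun S => by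
    show ((0 : ℤ) : K) * f.1 S = (0 : K); simp)
  zsmul_succ' n f := Subtype.ext (funext fun S => by
    show ((Int.ofNat n.succ : ℤ) : K) * f.1 S = ((Int.ofNat n : ℤ) : K) * f.1 S + f.1 S
    simp only [Int.ofNat_eq_coe]; push_cast; ring)
  zsmul_neg' n f := Subtype.ext (funext fun S => by
    show ((Int.negSucc n : ℤ) : K) * f.1 S = -(((n.succ : ℤ) : K) * f.1 S)
    simp [Int.negSucc_eq]; push_cast; ring)

noncomputable instance : Module K (PSer K) where
  smul a f := ⟨fun S => a * f.1 S, finite_smul a f⟩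
  one_smul f := Subtype.ext (funext fun S => one_mul _)
  mul_smul a b f := Subtype.ext (funext fun S => mul_assoc _ _ _)
  smul_zero a := Subtype.ext (funext fun S => mul_zero _)
  smul_add a f g := Subtype.ext (funext fun S => mul_add _ _ _)
  add_smul a b f := Subtype.ext (funext fun S => add_mul _ _ _)
  zero_smul f := Subtype.ext (funext fun S => zero_mul _)

@[simp] lemma add_coeff (f g : PSer K) (S : PT) : (f + g).1 S = f.1 S + g.1 S := rfl
@[simp] lemma smul_coeff (a : K) (f : PSer K) (S : PT) : (a • f).1 S = a * f.1 S := rfl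
@[simp] lemma zero_coeff (S : PT) : (0 : PSer K).1 S = 0 := rfl

end PSer

open PSer

/-- The indicator series of a single planar monomial `S ∈ P'(x,y)`. -/
noncomputable def mono (S : PT) : PSer K := by
  classical
  refine ⟨fun T => if T = S then 1 else 0, fun n => (Set.finite_singleton S).subset ?_⟩
  rintro T ⟨h1, -⟩
  by_contra hc
  exact h1 (if_neg (by simpa [Set.mem_singleton_iff] using hc))

/-- The unit series `1_P` (the empty tree). -/
noncomputable def onePS : PSer K := mono none

/-- The series `x` (the one-vertex tree labeled `x`). -/
noncomputable def Xps : PSer K := mono (some (.leaf .vx))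

/-- The series `y = dx` (the one-vertex tree labeled `y`). -/
noncomputable def Yps : PSer K := mono (some (.leaf .vy))

/-- Coefficient of the product `•_m(f₁,…,f_m)` at `S`: the (finite) sum of
`c_{S₁}(f₁)⋯c_{S_m}(f_m)` over all decompositions `S = •_m(S₁,…,S_m)`. -/
noncomputable def bulletCoeff (fs : List (PSer K)) (S : PT) : K :=
  ∑ᶠ t ∈ {t : List PT | t.length = fs.length ∧ graft t = S},
    (List.zipWith (fun f u => f.1 u) fs t).prod

open Classical in
/-- The `m`-ary product `•_m(f₁,…,f_m)` on `K{{x,y}` (`m = fs.length`). -/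
noncomputable def bullet (fs : List (PSer K)) : PSer K :=
  if h : ∀ n : ℕ, {S : PT | bulletCoeff fs S ≠ 0 ∧ degx S = n}.Finite
  then ⟨bulletCoeff fs, h⟩ else 0

/-- The `x`-order `ord_x(f) ∈ ℕ ∪ {∞}`: the least `x`-degree of a monomial with
nonzero coefficient (`∞` for `f = 0`). -/
noncomputable def ordx (f : PSer K) : ℕ∞ :=
  ⨅ S ∈ {S : PT | f.1 S ≠ 0}, (degx S : ℕ∞)

/-- The `x`-adic absolute value `|f|ₓ = (1/2)^{ord_x f}` (`= 0` for `f = 0`). -/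
noncomputable def normx (f : PSer K) : ℝ :=
  if ordx f = ⊤ then 0 else (2⁻¹ : ℝ) ^ (ordx f).toNat

/-- The `x`-adic distance `|f - g|ₓ`. -/
noncomputable def distx (f g : PSer K) : ℝ := normx (f - g)

/-- A Cauchy sequence for the `x`-adic distance. -/
def IsCauchySeq (u : ℕ → PSer K) : Prop :=
  ∀ ε : ℝ, 0 < ε → ∃ N : ℕ, ∀ p q : ℕ, N ≤ p → N ≤ q → distx (u p) (u q) < ε

/-- Convergence of a sequence to `f` for the `x`-adic distance. -/
def TendstoSeq (u : ℕ → PSer K) (f : PSer K) : Prop :=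
  ∀ ε : ℝ, 0 < ε → ∃ N : ℕ, ∀ p : ℕ, N ≤ p → distx (u p) f < ε

/-- Continuity of a map between two spaces equipped with distance functions. -/
def ContWrt {α β : Type*} (dα : α → α → ℝ) (dβ : β → β → ℝ) (φ : α → β) : Prop :=
  ∀ a : α, ∀ ε : ℝ, 0 < ε → ∃ δ : ℝ, 0 < δ ∧ ∀ b : α, dα b a < δ → dβ (φ b) (φ a) < ε

/-- The property of being supported on monomials all of whose leaves are labeled `x`. -/
def OnlyX (f : PSer K) : Prop := ∀ S : PT, f.1 S ≠ 0 → degy S = 0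

variable (K) in
/-- `K{{x}}`, the closed unital subalgebra of `K{{x,y}` generated by `x`, as a
submodule: the series supported on `1_P` and trees all of whose leaves are labeled `x`. -/
noncomputable def kxSub : Submodule K (PSer K) where
  carrier := {f | OnlyX f}
  add_mem' := by
    intro f g hf hg S hS
    by_cases h1 : f.1 S = 0
    · exact hg S (by simpa [h1] using hS)
    · exact hf S h1
  zero_mem' := by intro S hS; simp at hS
  smul_mem' := by
    intro a f hf S hS
    exact hf S (fun h => hS (by simp [h]))

variable (K) in
/-- The space `K{{x}}` of planar power series in `x`. -/
abbrev Kx : Type _ := ↥(kxSub K)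

@[simp] lemma mem_kxSub {f : PSer K} : f ∈ kxSub K ↔ OnlyX f := Iff.rfl

/-- The `x`-adic distance on `K{{x}}`. -/
noncomputable def distKx (f g : Kx K) : ℝ := distx f.1 g.1

lemma onePS_mem_kxSub : onePS ∈ kxSub (K := K) := by
  intro S hS
  by_cases h : S = none
  · subst h; rfl
  · exact absurd (if_neg h) hS

lemma Xps_mem_kxSub : Xps ∈ kxSub (K := K) := by
  intro S hS
  by_cases h : S = some (.leaf .vx)
  · subst h; simp [degy, PTree.countLeaf]
  · exact absurd (if_neg h) hS

/-- `1_P` as an element of `K{{x}}`. -/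
noncomputable def oneX : Kx K := ⟨onePS, onePS_mem_kxSub⟩

/-- `x` as an element of `K{{x}}`. -/
noncomputable def xX : Kx K := ⟨Xps, Xps_mem_kxSub⟩

open Classical in
/-- The `m`-ary product `•_m` on `K{{x}}` (`m = fs.length`). -/
noncomputable def bulletX (fs : List (Kx K)) : Kx K :=
  if h : bullet (fs.map (fun f => f.1)) ∈ kxSub K
  then ⟨bullet (fs.map (fun f => f.1)), h⟩ else 0

open Classical in
/-- The homogeneous component of degree `n` (w.r.t. `deg_x`) of a planar power series. -/
noncomputable def comp (f : PSer K) (n : ℕ) : PSer K :=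
  ⟨fun S => if degx S = n then f.1 S else 0, by
    intro m
    apply (f.2 m).subset
    rintro S ⟨h1, h2⟩
    refine ⟨?_, h2⟩
    by_cases hd : degx S = n
    · simpa [hd] using h1
    · simp [hd] at h1⟩

/-- The homogeneous component of degree `n` of an element of `K{{x}}`. -/
noncomputable def compX (f : Kx K) (n : ℕ) : Kx K :=
  ⟨comp f.1 n, by
    intro S hS
    apply (mem_kxSub.mp f.2) S
    simp only [comp] at hS
    by_cases hd : degx S = n
    · simpa [hd] using hS
    · simp [hd] at hS⟩

/-- A substitution homomorphism `φ_{(g,h)} : K{{x,y} → K{{x,y}`: `K`-linear, compatible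
with all grafting operations `•_m` (`m ≥ 2`), unital, `x ↦ g`, `y ↦ h`, and continuous
for the `x`-adic topology. -/
structure IsSubstHom (g h : PSer K) (φ : PSer K → PSer K) : Prop where
  linear : IsLinearMap K φ
  map_graft : ∀ fs : List (PSer K), 2 ≤ fs.length → φ (bullet fs) = bullet (fs.map φ)
  map_one : φ onePS = onePS
  map_X : φ Xps = g
  map_Y : φ Yps = h
  cont : ContWrt distx distx φ

/-- A substitution homomorphism `φ_g : K{{x}} → K{{x}}` with `x ↦ g`. -/
structure IsSubstHomX (g : Kx K) (φ : Kx K → Kx K) : Prop where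
  linear : IsLinearMap K φ
  map_graft : ∀ fs : List (Kx K), 2 ≤ fs.length → φ (bulletX fs) = bulletX (fs.map φ)
  map_one : φ oneX = oneX
  map_X : φ xX = g
  cont : ContWrt distKx distKx φ

/-- The universal derivation `d : K{{x}} → K{{x,y}`: continuous, `K`-linear, `d x = y`,
and satisfying the Leibniz rule for every grafting operation `•_m` (`m ≥ 2`). -/
structure IsUDeriv (d : Kx K → PSer K) : Prop where
  linear : IsLinearMap K d
  cont : ContWrt distKx distx d
  map_X : d xX = Yps
  leibniz : ∀ fs : List (Kx K), 2 ≤ fs.length →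
    d (bulletX fs) = ∑ i : Fin fs.length,
      bullet ((fs.map (fun f => f.1)).set i.1 (d (fs.get i)))

/-- The `k`-ary planar exponential series `Exp_k(x)`: constant coefficient `1`,
coefficient `1` at `x`, and `Exp_k(kx) = •_k(Exp_k(x),…,Exp_k(x))`. -/
structure IsExp (k : ℕ) (f : Kx K) : Prop where
  coeff_one : f.1.1 none = 1
  coeff_X : f.1.1 (some (.leaf .vx)) = 1
  funEq : ∀ φ : Kx K → Kx K, IsSubstHomX ((k : K) • xX) φ →
    φ f = bulletX (List.replicate k f)

/-- `ℓ = Log_k(1+x)`, the planar logarithm attached to a planar exponential series `e`: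
`ord_x ℓ ≥ 1` and `ℓ(e - 1) = x`. -/
structure IsLogOf (e ℓ : Kx K) : Prop where
  ord : 1 ≤ ordx ℓ.1
  eq : ∀ φ : Kx K → Kx K, IsSubstHomX (e - oneX) φ → φ ℓ = xX

end Planar

namespace Planar

open Classical PSer

variable {K : Type} [Field K]

lemma mono_coeff (S T : PT) : (mono (K := K) S).1 T = if T = S then 1 else 0 := rfl

lemma PTree.countLeaf_node (v : PVar) (a b : PTree) (r : List PTree) :
    PTree.countLeaf v (.node a b r) =
      PTree.countLeaf v a + PTree.countLeaf v b + (r.map (PTree.countLeaf v)).sum := by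
  rw [PTree.countLeaf]
  congr 1
  rw [List.attach_map_val]

@[simp] lemma degx_none : degx (none : PT) = 0 := rfl

lemma degx_some_node (a b : PTree) (r : List PTree) :
    degx (some (.node a b r)) =
      degx (some a) + degx (some b) + ((r.map (fun t => degx (some t))).sum) := by
  simp [degx, PTree.countLeaf_node]

/-- product of coefficients along a decomposition -/
def Pl (fs : List (PSer K)) (t : List PT) : K :=
  (List.zipWith (fun f u => f.1 u) fs t).prod

@[simp] lemma Pl_nil : Pl ([] : List (PSer K)) [] = 1 := rfl

@[simp] lemma Pl_cons (f : PSer K) (fs : List (PSer K)) (u : PT) (t : List PT) :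
    Pl (f :: fs) (u :: t) = f.1 u * Pl fs t := by
  simp [Pl]

lemma sum_map_degx (l : List PT) :
    (l.map degx).sum = (l.reduceOption.map (fun t => degx (some t))).sum := by
  induction l with
  | nil => rfl
  | cons a l ih =>
    cases a with
    | none => simpa [List.reduceOption] using ih
    | some t => simp [List.reduceOption, ih]

lemma degx_graft (l : List PT) : degx (graft l) = (l.map degx).sum := by
  rw [sum_map_degx]
  rw [graft]
  rcases h : l.reduceOption with _ | ⟨t1, _ | ⟨t2, ts⟩⟩ <;>
    simp [h, degx_some_node] <;> ring

lemma graft_singleton (u : PT) : graft [u] = u := by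
  cases u <;> rfl

lemma graft_cons_cons (a b : PTree) (r : List PTree) :
    graft (some a :: some b :: r.map some) = some (.node a b r) := by
  have hr : ∀ l : List PTree, (l.map some).reduceOption = l := by
    intro l; induction l with
    | nil => rfl
    | cons c l ih => simp [List.reduceOption_cons_of_some, ih]
  have : (some a :: some b :: r.map some).reduceOption = a :: b :: r := by
    simp [List.reduceOption_cons_of_some, hr]
  rw [graft, this]

lemma listsFinite {α : Type*} {s : Set α} (hs : s.Finite) :
    ∀ m : ℕ, {l : List α | l.length = m ∧ ∀ x ∈ l, x ∈ s}.Finite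
  | 0 => (Set.finite_singleton []).subset (by rintro l ⟨h1, -⟩; simp_all [List.length_eq_zero_iff])
  | (m + 1) => by
      apply ((hs.prod (listsFinite hs m)).image (fun p => p.1 :: p.2)).subset
      rintro l ⟨h1, h2⟩
      cases l with
      | nil => simp at h1
      | cons a l =>
        exact ⟨(a, l), ⟨h2 a (by simp), by simp at h1; exact ⟨h1, fun x hx => h2 x (by simp [hx])⟩⟩, rfl⟩

/-- allowed members of a decomposition of `S` -/
def okEntries (S : PT) : Set PT :=
  insert none (insert S (match S with
    | none => ∅
    | some (.leaf _) => ∅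
    | some (.node a b r) => insert (some a) (insert (some b) {u | ∃ c ∈ r, u = some c})))

lemma okEntries_finite (S : PT) : (okEntries S).Finite := by
  apply Set.Finite.insert
  apply Set.Finite.insert
  rcases S with _ | ⟨_ | ⟨a, b, r⟩⟩
  · exact Set.finite_empty
  · exact Set.finite_empty
  · apply Set.Finite.insert
    apply Set.Finite.insert
    have : {u : PT | ∃ c ∈ r, u = some c} = (fun c => some c) '' {c | c ∈ r} := by
      ext u; simp [eq_comm]
    rw [this]
    exact r.finite_toSet.image _

lemma mem_okEntries {S : PT} {t : List PT} (h : graft t = S) : ∀ u ∈ t, u ∈ okEntries S := by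
  intro u hu
  rcases u with _ | v
  · exact Set.mem_insert _ _
  · have hv : v ∈ t.reduceOption := List.reduceOption_mem_iff.2 hu
    rw [graft] at h
    rcases hr : t.reduceOption with _ | ⟨t1, _ | ⟨t2, ts⟩⟩ <;> rw [hr] at h hv
    · simp at hv
    · simp at hv
      subst hv
      subst h
      exact Set.mem_insert_iff.2 (Or.inr (Set.mem_insert _ _))
    · subst h
      simp only [List.mem_cons] at hv
      refine Set.mem_insert_iff.2 (Or.inr (Set.mem_insert_iff.2 (Or.inr ?_)))
      rcases hv with h1 | h1 | h1
      · subst h1; exact Set.mem_insert _ _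
      · subst h1; exact Set.mem_insert_iff.2 (Or.inr (Set.mem_insert _ _))
      · exact Set.mem_insert_iff.2 (Or.inr (Set.mem_insert_iff.2 (Or.inr ⟨v, h1, rfl⟩)))

/-- the decomposition fiber -/
def Fib (m : ℕ) (S : PT) : Set (List PT) := {t | t.length = m ∧ graft t = S}

lemma Fib_finite (m : ℕ) (S : PT) : (Fib m S).Finite := by
  apply (listsFinite (okEntries_finite S) m).subset
  rintro t ⟨h1, h2⟩
  exact ⟨h1, mem_okEntries h2⟩

lemma bulletCoeff_eq_sum (fs : List (PSer K)) (S : PT) :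
    bulletCoeff fs S = ∑ t ∈ (Fib_finite fs.length S).toFinset, Pl fs t := by
  rw [bulletCoeff,
    show {t : List PT | t.length = fs.length ∧ graft t = S} = Fib fs.length S from rfl,
    finsum_mem_eq_finite_toFinset_sum _ (Fib_finite fs.length S)]
  rfl

lemma Pl_forall₂ : ∀ (fs : List (PSer K)) (t : List PT), t.length = fs.length → Pl fs t ≠ 0 →
    List.Forall₂ (fun (f : PSer K) u => f.1 u ≠ 0) fs t
  | [], [], _, _ => List.Forall₂.nil
  | f :: fs, u :: t, hl, hP => by
    rw [Pl_cons] at hP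
    exact List.Forall₂.cons (left_ne_zero_of_mul hP)
      (Pl_forall₂ fs t (by simpa using hl) (right_ne_zero_of_mul hP))

lemma Pl_entries' : ∀ (fs : List (PSer K)) (t : List PT), t.length = fs.length → Pl fs t ≠ 0 →
    ∀ x ∈ t, ∃ f ∈ fs, f.1 x ≠ 0
  | [], [], _, _ => by simp
  | f :: fs, u :: t, hl, hP => by
    rw [Pl_cons] at hP
    intro x hx
    rcases List.mem_cons.1 hx with rfl | hx
    · exact ⟨f, by simp, left_ne_zero_of_mul hP⟩
    · obtain ⟨f', hf', h⟩ := Pl_entries' fs t (by simpa using hl) (right_ne_zero_of_mul hP) x hx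
      exact ⟨f', by simp [hf'], h⟩

lemma Pl_entries {fs : List (PSer K)} {t : List PT} (hl : t.length = fs.length)
    (hP : Pl fs t ≠ 0) : ∀ x ∈ t, ∃ f ∈ fs, f.1 x ≠ 0 := Pl_entries' fs t hl hP

def suppUpTo (fs : List (PSer K)) (n : ℕ) : Set PT :=
  {S | (∃ f ∈ fs, f.1 S ≠ 0) ∧ degx S ≤ n}

lemma suppUpTo_finite (fs : List (PSer K)) (n : ℕ) : (suppUpTo fs n).Finite := by
  apply Set.Finite.subset
    (fs.finite_toSet.biUnion fun f _ => (Set.finite_Iic n).biUnion fun k _ => f.2 k)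
  rintro S ⟨⟨f, hf, hS⟩, hd⟩
  exact Set.mem_biUnion hf (Set.mem_biUnion (Set.mem_Iic.2 hd) ⟨hS, rfl⟩)

lemma degx_le_of_mem {t : List PT} {x : PT} (hx : x ∈ t) : degx x ≤ degx (graft t) := by
  rw [degx_graft]
  exact List.single_le_sum (by simp) _ (List.mem_map_of_mem hx)

lemma bullet_finite (fs : List (PSer K)) (n : ℕ) :
    {S : PT | bulletCoeff fs S ≠ 0 ∧ degx S = n}.Finite := by
  apply ((listsFinite (suppUpTo_finite fs n) fs.length).image graft).subset
  rintro S ⟨h1, h2⟩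
  rw [bulletCoeff_eq_sum] at h1
  obtain ⟨t, ht, hP⟩ := Finset.exists_ne_zero_of_sum_ne_zero h1
  rw [Set.Finite.mem_toFinset] at ht
  obtain ⟨hlen, hgr⟩ := ht
  refine ⟨t, ⟨hlen, fun x hx => ⟨Pl_entries hlen hP x hx, ?_⟩⟩, hgr⟩
  calc degx x ≤ degx (graft t) := degx_le_of_mem hx
    _ = n := by rw [hgr, h2]

lemma bullet_def (fs : List (PSer K)) : bullet fs = ⟨bulletCoeff fs, bullet_finite fs⟩ := by
  unfold bullet
  exact dif_pos _

lemma bullet_coeff (fs : List (PSer K)) (S : PT) : (bullet fs).1 S = bulletCoeff fs S := by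
  rw [bullet_def]

@[simp] lemma onePS_coeff (S : PT) : (onePS (K := K)).1 S = if S = none then 1 else 0 := rfl

lemma bullet_nil : bullet ([] : List (PSer K)) = onePS := by
  apply Subtype.ext; funext S
  rw [bullet_coeff, bulletCoeff_eq_sum, onePS_coeff]
  by_cases h : S = none
  · subst h
    rw [show (Fib_finite ([] : List (PSer K)).length none).toFinset = {([] : List PT)} by
      ext t; simp [Fib, List.length_eq_zero_iff]; rintro rfl; rfl]
    simp
  · rw [show (Fib_finite ([] : List (PSer K)).length S).toFinset = ∅ by
      ext t; simp [Fib, List.length_eq_zero_iff]; rintro rfl; exact fun hc => h hc.symm]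
    simp [h]

lemma bullet_singleton (f : PSer K) : bullet [f] = f := by
  apply Subtype.ext; funext S
  rw [bullet_coeff, bulletCoeff_eq_sum]
  rw [show (Fib_finite [f].length S).toFinset = {[S]} by
    ext t
    simp only [Set.Finite.mem_toFinset, Fib, Set.mem_setOf_eq, List.length_eq_one_iff,
      Finset.mem_singleton]
    constructor
    · rintro ⟨h1, h2⟩
      obtain ⟨a, rfl⟩ := List.length_eq_one_iff.1 (by simpa using h1)
      rw [graft_singleton] at h2; rw [h2]
    · rintro rfl; exact ⟨rfl, graft_singleton S⟩]
  simp [Pl]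

lemma graft_congr {t₁ t₂ : List PT} (h : t₁.reduceOption = t₂.reduceOption) :
    graft t₁ = graft t₂ := by
  unfold graft; rw [h]

lemma Pl_append {as bs : List (PSer K)} {u v : List PT} (h : as.length = u.length) :
    Pl (as ++ bs) (u ++ v) = Pl as u * Pl bs v := by
  unfold Pl
  rw [List.zipWith_append h, List.prod_append]

lemma bullet_drop_one (as bs : List (PSer K)) :
    bullet (as ++ onePS :: bs) = bullet (as ++ bs) := by
  classical
  apply Subtype.ext; funext S
  rw [bullet_coeff, bullet_coeff, bulletCoeff_eq_sum, bulletCoeff_eq_sum]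
  set m₁ := as.length
  set j : List PT → List PT := fun t => t.take m₁ ++ none :: t.drop m₁ with hj
  set F₀ := (Fib_finite (as ++ bs).length S).toFinset
  set F₁ := (Fib_finite (as ++ onePS :: bs).length S).toFinset
  have hmemF₀ : ∀ t, t ∈ F₀ ↔ t.length = as.length + bs.length ∧ graft t = S := by
    intro t; simp [F₀, Fib, Set.Finite.mem_toFinset]
  have hmemF₁ : ∀ t, t ∈ F₁ ↔ t.length = as.length + (bs.length + 1) ∧ graft t = S := by
    intro t; simp [F₁, Fib, Set.Finite.mem_toFinset]
  have hgraftj : ∀ t : List PT, graft (j t) = graft t := by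
    intro t
    apply graft_congr
    simp only [hj]
    rw [List.reduceOption_append, List.reduceOption_cons_of_none, ← List.reduceOption_append,
      List.take_append_drop]
  have hsub : F₀.image j ⊆ F₁ := by
    intro t ht
    obtain ⟨t₀, ht₀, rfl⟩ := Finset.mem_image.1 ht
    rw [hmemF₀] at ht₀
    rw [hmemF₁]
    constructor
    · simp only [hj, List.length_append, List.length_cons, List.length_take, List.length_drop,
        ht₀.1]
      omega
    · rw [hgraftj]; exact ht₀.2
  have htake : ∀ t₀, t₀ ∈ F₀ → (j t₀).take m₁ = t₀.take m₁ ∧ (j t₀).drop (m₁+1) = t₀.drop m₁ := by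
    intro t₀ ht₀
    have hlen : (t₀.take m₁).length = m₁ := by
      rw [List.length_take]
      rw [hmemF₀] at ht₀
      omega
    constructor
    · exact List.take_left' hlen (l₂ := none :: t₀.drop m₁)
    · show ((t₀.take m₁) ++ none :: t₀.drop m₁).drop (m₁ + 1) = t₀.drop m₁
      rw [show (t₀.take m₁) ++ none :: t₀.drop m₁ = ((t₀.take m₁) ++ [none]) ++ t₀.drop m₁ by simp]
      exact List.drop_left' (by simp [hlen])
  have hinj : Set.InjOn j ↑F₀ := by
    intro t₁ h₁ t₂ h₂ he
    have e1 := (htake t₁ h₁).1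
    have e2 := (htake t₂ h₂).1
    have e3 := (htake t₁ h₁).2
    have e4 := (htake t₂ h₂).2
    rw [← List.take_append_drop m₁ t₁, ← List.take_append_drop m₁ t₂]
    rw [← e1, ← e2, ← e3, ← e4, he]
  have hzero : ∀ t ∈ F₁, t ∉ F₀.image j → Pl (as ++ onePS :: bs) t = 0 := by
    intro t ht hnot
    by_contra hP
    apply hnot
    rw [hmemF₁] at ht
    have hm₁lt : m₁ < t.length := by omega
    have hdec : t = t.take m₁ ++ t[m₁] :: t.drop (m₁ + 1) := by
      conv_lhs => rw [← List.take_append_drop m₁ t]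
      rw [List.drop_eq_getElem_cons hm₁lt]
    have hlen : (t.take m₁).length = m₁ := by rw [List.length_take]; omega
    have hone : (onePS (K := K)).1 (t[m₁]) ≠ 0 := by
      intro hzero
      apply hP
      conv_lhs => rw [hdec]
      rw [Pl_append hlen.symm, Pl_cons, hzero]
      ring
    have hnone : t[m₁] = none := by
      by_contra hc
      rw [onePS_coeff, if_neg hc] at hone
      exact hone rfl
    refine Finset.mem_image.2 ⟨t.take m₁ ++ t.drop (m₁ + 1), ?_, ?_⟩
    · rw [hmemF₀]
      constructor
      · rw [List.length_append, hlen, List.length_drop]; omega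
      · rw [← ht.2]
        conv_rhs => rw [hdec, hnone]
        apply graft_congr
        rw [List.reduceOption_append, List.reduceOption_append,
          List.reduceOption_cons_of_none]
    · have h1 : (t.take m₁ ++ t.drop (m₁ + 1)).take m₁ = t.take m₁ := List.take_left' hlen
      have h2 : (t.take m₁ ++ t.drop (m₁ + 1)).drop m₁ = t.drop (m₁ + 1) :=
        List.drop_left' hlen
      show (t.take m₁ ++ t.drop (m₁ + 1)).take m₁ ++
        none :: (t.take m₁ ++ t.drop (m₁ + 1)).drop m₁ = t
      rw [h1, h2]
      conv_rhs => rw [hdec, hnone]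
  rw [← Finset.sum_subset hsub hzero, Finset.sum_image (fun x hx y hy => hinj hx hy)]
  apply Finset.sum_congr rfl
  intro t₀ ht₀
  have hlen : (t₀.take m₁).length = m₁ := by
    rw [List.length_take]; rw [hmemF₀] at ht₀; omega
  conv_lhs => rw [show j t₀ = t₀.take m₁ ++ none :: t₀.drop m₁ from rfl]
  conv_rhs => rw [← List.take_append_drop m₁ t₀]
  rw [Pl_append hlen.symm, Pl_append hlen.symm]
  have : Pl (onePS :: bs) (none :: t₀.drop m₁) = Pl bs (t₀.drop m₁) := by
    rw [Pl_cons, onePS_coeff, if_pos rfl, one_mul]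
  rw [this]

lemma bullet_map_reduce (ρ : PT → PSer K) (hρ : ρ none = onePS) :
    ∀ (l : List PT) (as : List (PSer K)),
      bullet (as ++ l.map ρ) = bullet (as ++ l.reduceOption.map (fun t => ρ (some t)))
  | [], as => rfl
  | (none :: l), as => by
      rw [List.map_cons, hρ, List.reduceOption_cons_of_none, bullet_drop_one]
      exact bullet_map_reduce ρ hρ l as
  | (some t :: l), as => by
      rw [List.map_cons, List.reduceOption_cons_of_some, List.map_cons,
        show as ++ ρ (some t) :: l.map ρ = (as ++ [ρ (some t)]) ++ l.map ρ by simp,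
        show as ++ ρ (some t) :: l.reduceOption.map (fun t => ρ (some t))
          = (as ++ [ρ (some t)]) ++ l.reduceOption.map (fun t => ρ (some t)) by simp]
      exact bullet_map_reduce ρ hρ l (as ++ [ρ (some t)])

lemma Pl_map_mono : ∀ (l t : List PT), t.length = l.length →
    Pl (l.map mono) t = if t = l then (1 : K) else 0
  | [], [], _ => by simp
  | (a :: l), (u :: t), h => by
      rw [List.map_cons, Pl_cons, mono_coeff, Pl_map_mono l t (by simpa using h)]
      by_cases h1 : u = a <;> by_cases h2 : t = l <;> simp [h1, h2]

lemma bullet_map_mono (l : List PT) : bullet (l.map mono) = mono (K := K) (graft l) := by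
  classical
  apply Subtype.ext; funext S
  rw [bullet_coeff, bulletCoeff_eq_sum, mono_coeff]
  have : ∀ t ∈ (Fib_finite (l.map (mono (K := K))).length S).toFinset,
      Pl (l.map mono) t = if t = l then (1 : K) else 0 := by
    intro t ht
    rw [Set.Finite.mem_toFinset] at ht
    exact Pl_map_mono l t (by simpa using ht.1)
  rw [Finset.sum_congr rfl this, Finset.sum_ite_eq' _ l (fun _ => (1 : K))]
  by_cases h : graft l = S
  · rw [if_pos (by rw [Set.Finite.mem_toFinset]; exact ⟨by simp, h⟩), if_pos h.symm]
  · rw [if_neg (by rw [Set.Finite.mem_toFinset]; rintro ⟨-, h2⟩; exact h h2),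
      if_neg (fun hc => h hc.symm)]
section Sub

variable (g h : PSer K)

noncomputable def subT : PTree → PSer K
  | .leaf .vx => g
  | .leaf .vy => h
  | .node t1 t2 rest =>
      bullet (subT t1 :: subT t2 :: rest.attach.map fun t => subT t.1)
decreasing_by
  all_goals simp_wf
  · omega
  · omega
  · have := List.sizeOf_lt_of_mem t.2
    omega

lemma subT_leaf_x : subT g h (.leaf .vx) = g := by rw [subT]

lemma subT_leaf_y : subT g h (.leaf .vy) = h := by rw [subT]

lemma subT_node (a b : PTree) (r : List PTree) :
    subT g h (.node a b r) = bullet (subT g h a :: subT g h b :: r.map (subT g h)) := by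
  rw [subT]
  congr 2
  rw [List.attach_map_val]

noncomputable def subPT : PT → PSer K := fun S => S.elim onePS (subT g h)

@[simp] lemma subPT_none : subPT g h none = onePS := rfl

@[simp] lemma subPT_some (t : PTree) : subPT g h (some t) = subT g h t := rfl

lemma subPT_graft (l : List PT) : subPT g h (graft l) = bullet (l.map (subPT g h)) := by
  rw [show l.map (subPT g h) = [] ++ l.map (subPT g h) from (List.nil_append _).symm,
    bullet_map_reduce (subPT g h) rfl, List.nil_append]
  have hg2 : graft l = (match l.reduceOption with
    | [] => none
    | [t] => some t
    | t1 :: t2 :: ts => some (.node t1 t2 ts)) := rfl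
  rcases hr : l.reduceOption with _ | ⟨t1, _ | ⟨t2, ts⟩⟩ <;> rw [hg2, hr]
  · exact bullet_nil.symm
  · rw [List.map_cons, List.map_nil]
    exact (bullet_singleton _).symm
  · show subT g h (.node t1 t2 ts) = _
    rw [subT_node]
    rfl

lemma ordx_le_degx (f : PSer K) {S : PT} (hS : f.1 S ≠ 0) : ordx f ≤ (degx S : ℕ∞) :=
  iInf₂_le S hS

lemma one_le_degx' {f : PSer K} (hf : 1 ≤ ordx f) {S : PT} (hS : f.1 S ≠ 0) : 1 ≤ degx S := by
  have := le_trans hf (ordx_le_degx f hS)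
  exact_mod_cast this

lemma Pl_sum_le : ∀ (rs : List PTree) (ws : List PT), ws.length = rs.length →
    (∀ c ∈ rs, ∀ T : PT, (subT g h c).1 T ≠ 0 → PTree.countLeaf .vx c ≤ degx T) →
    Pl (rs.map (subT g h)) ws ≠ 0 →
    (rs.map (PTree.countLeaf .vx)).sum ≤ (ws.map degx).sum
  | [], [], _, _, _ => le_refl 0
  | [], _ :: _, hl, _, _ => by simp at hl
  | _ :: _, [], hl, _, _ => by simp at hl
  | c :: rs, w :: ws, hl, hIH, hP => by
    rw [List.map_cons, Pl_cons] at hP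
    simp only [List.map_cons, List.sum_cons]
    have h1 := hIH c (by simp) w (left_ne_zero_of_mul hP)
    have h2 := Pl_sum_le rs ws (by simpa using hl)
      (fun c hc => hIH c (by simp [hc])) (right_ne_zero_of_mul hP)
    omega

lemma subT_degx (hg : 1 ≤ ordx g) : ∀ (t : PTree) (T : PT), (subT g h t).1 T ≠ 0 →
    PTree.countLeaf .vx t ≤ degx T
  | .leaf .vx, T, hT => by
    rw [subT_leaf_x] at hT
    simpa [PTree.countLeaf] using one_le_degx' hg hT
  | .leaf .vy, T, hT => by
    simp [PTree.countLeaf]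
  | .node a b r, T, hT => by
    rw [subT_node, bullet_coeff, bulletCoeff_eq_sum] at hT
    obtain ⟨u, hu, hP⟩ := Finset.exists_ne_zero_of_sum_ne_zero hT
    rw [Set.Finite.mem_toFinset] at hu
    obtain ⟨hlen, hgr⟩ := hu
    have hP' : Pl ((a :: b :: r).map (subT g h)) u ≠ 0 := hP
    have hsum := Pl_sum_le g h (a :: b :: r) u (by simpa using hlen)
      (fun c hc T hT => subT_degx hg c T hT) hP'
    have hdeg : (u.map degx).sum = degx T := by rw [← degx_graft, hgr]
    rw [PTree.countLeaf_node]
    simp only [List.map_cons, List.sum_cons] at hsum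
    omega
decreasing_by
  all_goals simp_wf
  rcases List.mem_cons.1 hc with rfl | hc
  · omega
  rcases List.mem_cons.1 hc with rfl | hc
  · omega
  · have := List.sizeOf_lt_of_mem hc
    omega

lemma subPT_degx (hg : 1 ≤ ordx g) (S T : PT) (hT : (subPT g h S).1 T ≠ 0) :
    degx S ≤ degx T := by
  cases S with
  | none => exact Nat.zero_le _
  | some t => exact subT_degx g h hg t T hT

lemma phi_support_finite (hg : 1 ≤ ordx g) (f : PSer K) (T : PT) :
    (Function.support fun S => f.1 S * (subPT g h S).1 T).Finite := by
  apply Set.Finite.subset ((Set.finite_Iic (degx T)).biUnion fun n _ => f.2 n)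
  intro S hS
  exact Set.mem_biUnion
    (Set.mem_Iic.2 (subPT_degx g h hg S T (right_ne_zero_of_mul hS)))
    ⟨left_ne_zero_of_mul hS, rfl⟩

noncomputable def phi (hg : 1 ≤ ordx g) (f : PSer K) : PSer K :=
  ⟨fun T => ∑ᶠ S : PT, f.1 S * (subPT g h S).1 T, by
    intro n
    have hA : (⋃ k ∈ Set.Iic n, {S : PT | f.1 S ≠ 0 ∧ degx S = k}).Finite :=
      (Set.finite_Iic n).biUnion fun k _ => f.2 k
    apply Set.Finite.subset (hA.biUnion fun S _ => (subPT g h S).2 n)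
    rintro T ⟨hne, hdeg⟩
    have : ∃ S, f.1 S * (subPT g h S).1 T ≠ 0 := by
      by_contra hc
      push_neg at hc
      exact hne (finsum_eq_zero_of_forall_eq_zero hc)
    obtain ⟨S, hS⟩ := this
    exact Set.mem_biUnion
      (Set.mem_biUnion
        (Set.mem_Iic.2 (hdeg ▸ subPT_degx g h hg S T (right_ne_zero_of_mul hS)))
        ⟨left_ne_zero_of_mul hS, rfl⟩)
      ⟨right_ne_zero_of_mul hS, hdeg⟩⟩

lemma phi_coeff (hg : 1 ≤ ordx g) (f : PSer K) (T : PT) :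
    (phi g h hg f).1 T = ∑ᶠ S : PT, f.1 S * (subPT g h S).1 T := rfl

lemma phi_add (hg : 1 ≤ ordx g) (f₁ f₂ : PSer K) : phi g h hg (f₁ + f₂) = phi g h hg f₁ + phi g h hg f₂ := by
  apply Subtype.ext; funext T
  rw [add_coeff, phi_coeff, phi_coeff, phi_coeff]
  calc ∑ᶠ S : PT, (f₁ + f₂).1 S * (subPT g h S).1 T
      = ∑ᶠ S : PT, (f₁.1 S * (subPT g h S).1 T + f₂.1 S * (subPT g h S).1 T) := by
        apply finsum_congr; intro S; rw [add_coeff, add_mul]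
    _ = _ := finsum_add_distrib (phi_support_finite g h hg f₁ T) (phi_support_finite g h hg f₂ T)

lemma phi_smul (hg : 1 ≤ ordx g) (a : K) (f : PSer K) : phi g h hg (a • f) = a • phi g h hg f := by
  apply Subtype.ext; funext T
  rw [smul_coeff, phi_coeff, phi_coeff]
  rw [mul_finsum _ a]
  apply finsum_congr; intro S
  rw [smul_coeff, mul_assoc]

lemma phi_linear (hg : 1 ≤ ordx g) : IsLinearMap K (phi g h hg) :=
  ⟨phi_add g h hg, phi_smul g h hg⟩

lemma phi_mono (hg : 1 ≤ ordx g) (S₀ : PT) : phi g h hg (mono S₀) = subPT g h S₀ := by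
  apply Subtype.ext; funext T
  rw [phi_coeff]
  rw [finsum_eq_single _ S₀ (fun S hS => by rw [mono_coeff, if_neg hS, zero_mul])]
  rw [mono_coeff, if_pos rfl, one_mul]

end Sub
section GraftCompat

variable (g h : PSer K)

noncomputable def listsOf (D : Finset PT) : ℕ → Finset (List PT)
  | 0 => {[]}
  | m + 1 => (D ×ˢ listsOf D m).image fun p => p.1 :: p.2

lemma mem_listsOf (D : Finset PT) : ∀ (m : ℕ) (t : List PT),
    t ∈ listsOf D m ↔ t.length = m ∧ ∀ x ∈ t, x ∈ D
  | 0, t => by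
    rw [listsOf]
    constructor
    · intro ht
      rw [Finset.mem_singleton] at ht
      subst ht; simp
    · rintro ⟨h1, -⟩
      rw [List.length_eq_zero_iff] at h1
      subst h1; simp
  | m + 1, t => by
    rw [listsOf]
    constructor
    · intro ht
      obtain ⟨⟨a, s⟩, hmem, rfl⟩ := Finset.mem_image.1 ht
      obtain ⟨ha, hs⟩ := Finset.mem_product.1 hmem
      obtain ⟨h1, h2⟩ := (mem_listsOf D m s).1 hs
      refine ⟨by simp [h1], fun x hx => ?_⟩
      rcases List.mem_cons.1 hx with rfl | hx
      · exact ha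
      · exact h2 x hx
    · rintro ⟨h1, h2⟩
      cases t with
      | nil => simp at h1
      | cons a s =>
        refine Finset.mem_image.2 ⟨(a, s), Finset.mem_product.2
          ⟨h2 a (by simp), (mem_listsOf D m s).2
            ⟨by simpa using h1, fun x hx => h2 x (by simp [hx])⟩⟩, rfl⟩

lemma zipWith_congr' {α β γ : Type*} (F G : α → β → γ) :
    ∀ (l : List α) (l' : List β), (∀ a ∈ l, ∀ b ∈ l', F a b = G a b) →
      List.zipWith F l l' = List.zipWith G l l'
  | [], l', _ => by simp
  | a :: l, [], _ => by simp
  | a :: l, b :: l', hc => by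
    rw [List.zipWith_cons_cons, List.zipWith_cons_cons, hc a (by simp) b (by simp),
      zipWith_congr' F G l l' (fun x hx y hy => hc x (by simp [hx]) y (by simp [hy]))]

lemma expand (D : Finset PT) (ρ : PT → PSer K) :
    ∀ (fs : List (PSer K)) (u : List PT), u.length = fs.length →
      (List.zipWith (fun (f : PSer K) v => ∑ S ∈ D, f.1 S * (ρ S).1 v) fs u).prod
        = ∑ σ ∈ listsOf D fs.length, Pl fs σ * Pl (σ.map ρ) u
  | [], [], _ => by simp [listsOf, Pl]
  | [], _ :: _, hl => by simp at hl
  | f :: fs, [], hl => by simp at hl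
  | f :: fs, v :: u, hl => by
    rw [List.zipWith_cons_cons, List.prod_cons, expand D ρ fs u (by simpa using hl),
      show (f :: fs).length = fs.length + 1 from rfl, listsOf]
    calc (∑ S ∈ D, f.1 S * (ρ S).1 v) * ∑ σ ∈ listsOf D fs.length, Pl fs σ * Pl (σ.map ρ) u
        = ∑ S ∈ D, ∑ σ ∈ listsOf D fs.length,
            (f.1 S * (ρ S).1 v) * (Pl fs σ * Pl (σ.map ρ) u) := Finset.sum_mul_sum _ _ _ _
      _ = ∑ p ∈ D ×ˢ listsOf D fs.length,
            Pl (f :: fs) (p.1 :: p.2) * Pl ((p.1 :: p.2).map ρ) (v :: u) := by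
          rw [Finset.sum_product]
          apply Finset.sum_congr rfl; intro a _
          apply Finset.sum_congr rfl; intro s _
          dsimp only
          rw [List.map_cons, Pl_cons, Pl_cons]
          ring
      _ = ∑ τ ∈ (D ×ˢ listsOf D fs.length).image (fun p => p.1 :: p.2),
            Pl (f :: fs) τ * Pl (τ.map ρ) (v :: u) := by
          rw [Finset.sum_image]
          intro p _ q _ he
          cases p; cases q; simpa using he

lemma bulletCoeff_eq_sum' (fs : List (PSer K)) (S : PT) {m : ℕ} (hm : fs.length = m) :
    (bullet fs).1 S = ∑ t ∈ (Fib_finite m S).toFinset, Pl fs t := by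
  subst hm
  rw [bullet_coeff, bulletCoeff_eq_sum]

lemma regroup (hg : 1 ≤ ordx g) (fs : List (PSer K)) (T : PT) (D : Finset PT)
    (hD : ∀ t : List PT, t.length = fs.length → Pl fs t ≠ 0 →
      (subPT g h (graft t)).1 T ≠ 0 → ∀ x ∈ t, x ∈ D) :
    ∑ᶠ S : PT, (bullet fs).1 S * (subPT g h S).1 T
      = ∑ σ ∈ listsOf D fs.length, Pl fs σ * (subPT g h (graft σ)).1 T := by
  classical
  set E := (listsOf D fs.length).image graft with hE
  have hsupp : Function.support (fun S => (bullet fs).1 S * (subPT g h S).1 T) ⊆ ↑E := by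
    intro S hS
    have h1 : (bullet fs).1 S ≠ 0 := left_ne_zero_of_mul hS
    have h2 : (subPT g h S).1 T ≠ 0 := right_ne_zero_of_mul hS
    rw [bullet_coeff, bulletCoeff_eq_sum] at h1
    obtain ⟨t, ht, hP⟩ := Finset.exists_ne_zero_of_sum_ne_zero h1
    rw [Set.Finite.mem_toFinset] at ht
    have hDmem := hD t ht.1 hP (by rw [ht.2]; exact h2)
    rw [hE]
    exact Finset.mem_coe.2 (Finset.mem_image.2
      ⟨t, (mem_listsOf D fs.length t).2 ⟨ht.1, hDmem⟩, ht.2⟩)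
  rw [finsum_eq_finset_sum_of_support_subset _ hsupp]
  have key : ∀ S ∈ E, (bullet fs).1 S * (subPT g h S).1 T
      = ∑ t ∈ (listsOf D fs.length).filter (fun t => graft t = S),
          Pl fs t * (subPT g h (graft t)).1 T := by
    intro S _
    rw [bullet_coeff, bulletCoeff_eq_sum, Finset.sum_mul]
    have e1 : ∑ t ∈ (Fib_finite fs.length S).toFinset, Pl fs t * (subPT g h S).1 T
        = ∑ t ∈ (Fib_finite fs.length S).toFinset, Pl fs t * (subPT g h (graft t)).1 T := by
      apply Finset.sum_congr rfl
      intro t ht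
      rw [Set.Finite.mem_toFinset] at ht
      rw [ht.2]
    have hfil : (listsOf D fs.length).filter (fun t => graft t = S)
        = (Fib_finite fs.length S).toFinset ∩ listsOf D fs.length := by
      ext t
      simp only [Finset.mem_filter, Finset.mem_inter, Set.Finite.mem_toFinset]
      constructor
      · rintro ⟨h1, h2⟩
        exact ⟨⟨((mem_listsOf D fs.length t).1 h1).1, h2⟩, h1⟩
      · rintro ⟨⟨h1, h2⟩, h3⟩
        exact ⟨h3, h2⟩
    rw [e1, hfil]
    symm
    apply Finset.sum_subset Finset.inter_subset_left
    intro t ht hnot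
    by_contra hne
    apply hnot
    rw [Set.Finite.mem_toFinset] at ht
    refine Finset.mem_inter.2 ⟨by rw [Set.Finite.mem_toFinset]; exact ht,
      (mem_listsOf D fs.length t).2 ⟨ht.1,
        hD t ht.1 (left_ne_zero_of_mul hne) (right_ne_zero_of_mul hne)⟩⟩
  rw [Finset.sum_congr rfl key]
  exact Finset.sum_fiberwise_of_maps_to
    (fun t ht => Finset.mem_image.2 ⟨t, ht, rfl⟩) _

lemma phi_graft (hg : 1 ≤ ordx g) (fs : List (PSer K)) :
    phi g h hg (bullet fs) = bullet (fs.map (phi g h hg)) := by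
  classical
  apply Subtype.ext; funext T
  have hDfin := suppUpTo_finite fs (degx T)
  set D := hDfin.toFinset with hDdef
  have hDmem : ∀ {f : PSer K}, f ∈ fs → ∀ {S v : PT}, degx v ≤ degx T →
      f.1 S ≠ 0 → (subPT g h S).1 v ≠ 0 → S ∈ D := by
    intro f hf S v hv h1 h2
    rw [hDdef, Set.Finite.mem_toFinset]
    exact ⟨⟨f, hf, h1⟩, le_trans (le_trans (subPT_degx g h hg S v h2) hv) le_rfl⟩
  have hDprop : ∀ t : List PT, t.length = fs.length → Pl fs t ≠ 0 →
      (subPT g h (graft t)).1 T ≠ 0 → ∀ x ∈ t, x ∈ D := by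
    intro t hlen hP hsub x hx
    rw [hDdef, Set.Finite.mem_toFinset]
    exact ⟨Pl_entries hlen hP x hx,
      le_trans (degx_le_of_mem hx) (subPT_degx g h hg (graft t) T hsub)⟩
  rw [phi_coeff g h hg (bullet fs) T, regroup g h hg fs T D hDprop,
    bulletCoeff_eq_sum' (fs.map (phi g h hg)) T (m := fs.length) (by simp)]
  have step1 : ∀ u ∈ (Fib_finite fs.length T).toFinset,
      Pl (fs.map (phi g h hg)) u
        = ∑ σ ∈ listsOf D fs.length, Pl fs σ * Pl (σ.map (subPT g h)) u := by
    intro u hu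
    rw [Set.Finite.mem_toFinset] at hu
    show (List.zipWith (fun f w => f.1 w) (fs.map (phi g h hg)) u).prod = _
    rw [List.zipWith_map_left]
    rw [zipWith_congr' _ (fun (f : PSer K) v => ∑ S ∈ D, f.1 S * (subPT g h S).1 v) fs u
      (by
        intro f hf v hv
        show (phi g h hg f).1 v = _
        rw [phi_coeff]
        apply finsum_eq_finset_sum_of_support_subset
        intro S hS
        simp only [Finset.coe_sort_coe, Finset.mem_coe]
        exact hDmem hf (le_trans (degx_le_of_mem hv) (le_of_eq (by rw [hu.2])))
          (left_ne_zero_of_mul hS) (right_ne_zero_of_mul hS))]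
    exact expand D (subPT g h) fs u hu.1
  calc ∑ σ ∈ listsOf D fs.length, Pl fs σ * (subPT g h (graft σ)).1 T
      = ∑ σ ∈ listsOf D fs.length, ∑ u ∈ (Fib_finite fs.length T).toFinset,
          Pl fs σ * Pl (σ.map (subPT g h)) u := by
        apply Finset.sum_congr rfl
        intro σ hσ
        rw [← Finset.mul_sum]
        congr 1
        rw [subPT_graft, bulletCoeff_eq_sum' (σ.map (subPT g h)) T (m := fs.length)
          (by simp [((mem_listsOf D fs.length σ).1 hσ).1])]
    _ = ∑ u ∈ (Fib_finite fs.length T).toFinset, ∑ σ ∈ listsOf D fs.length,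
          Pl fs σ * Pl (σ.map (subPT g h)) u := Finset.sum_comm
    _ = ∑ u ∈ (Fib_finite fs.length T).toFinset, Pl (fs.map (phi g h hg)) u :=
        (Finset.sum_congr rfl step1).symm

end GraftCompat
section Norms

lemma le_ordx {f : PSer K} {n : ℕ∞} (hn : ∀ S : PT, f.1 S ≠ 0 → n ≤ (degx S : ℕ∞)) :
    n ≤ ordx f :=
  le_iInf₂ hn

lemma ordx_zero : ordx (0 : PSer K) = ⊤ := by
  have hset : {S : PT | (0 : PSer K).1 S ≠ 0} = ∅ := by ext S; simp
  rw [ordx, hset]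
  exact iInf_emptyset

lemma exists_coeff_ne_zero {f : PSer K} (hf : f ≠ 0) : ∃ S, f.1 S ≠ 0 := by
  by_contra hc
  push_neg at hc
  exact hf (Subtype.ext (funext fun S => hc S))

lemma ordx_ne_top {f : PSer K} (hf : f ≠ 0) : ordx f ≠ ⊤ := by
  obtain ⟨S, hS⟩ := exists_coeff_ne_zero hf
  exact ne_top_of_le_ne_top (by exact_mod_cast WithTop.coe_ne_top) (ordx_le_degx f hS)

lemma normx_nonneg (f : PSer K) : 0 ≤ normx f := by
  rw [normx]
  split
  · exact le_refl 0
  · positivity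

lemma eq_zero_of_normx_eq_zero {f : PSer K} (hf : normx f = 0) : f = 0 := by
  by_contra hne
  rw [normx, if_neg (ordx_ne_top hne)] at hf
  exact absurd hf (by positivity)

lemma normx_anti {u v : PSer K} (huv : ordx u ≤ ordx v) : normx v ≤ normx u := by
  by_cases hv : ordx v = ⊤
  · rw [normx, if_pos hv]
    exact normx_nonneg u
  · have hu : ordx u ≠ ⊤ := fun hc => hv (top_le_iff.1 (hc ▸ huv))
    rw [normx, if_neg hv, normx, if_neg hu]
    exact pow_le_pow_of_le_one (by norm_num) (by norm_num) (ENat.toNat_le_toNat huv hv)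

lemma normx_le_pow {u : PSer K} {N : ℕ} (h : (N : ℕ∞) ≤ ordx u) :
    normx u ≤ (2⁻¹ : ℝ) ^ N := by
  by_cases hu : ordx u = ⊤
  · rw [normx, if_pos hu]
    positivity
  · rw [normx, if_neg hu]
    apply pow_le_pow_of_le_one (by norm_num) (by norm_num)
    have := ENat.toNat_le_toNat h hu
    simpa using this

lemma min_le_ordx_add (u v : PSer K) : min (ordx u) (ordx v) ≤ ordx (u + v) := by
  apply le_ordx
  intro S hS
  rw [add_coeff] at hS
  by_cases h1 : u.1 S = 0
  · have h2 : v.1 S ≠ 0 := fun h2 => hS (by rw [h1, h2, add_zero])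
    exact le_trans (min_le_right _ _) (ordx_le_degx v h2)
  · exact le_trans (min_le_left _ _) (ordx_le_degx u h1)

lemma normx_add_le_max (u v : PSer K) : normx (u + v) ≤ max (normx u) (normx v) := by
  rcases min_cases (ordx u) (ordx v) with ⟨he, -⟩ | ⟨he, -⟩
  · exact le_max_of_le_left (normx_anti (he ▸ min_le_ordx_add u v))
  · exact le_max_of_le_right (normx_anti (he ▸ min_le_ordx_add u v))

@[simp] lemma neg_coeff (u : PSer K) (S : PT) : (-u).1 S = -(u.1 S) := rfl

lemma sub_coeff (u v : PSer K) (S : PT) : (u - v).1 S = u.1 S - v.1 S := by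
  show u.1 S + -(v.1 S) = u.1 S - v.1 S
  rw [sub_eq_add_neg]

lemma ordx_neg (u : PSer K) : ordx (-u) = ordx u := by
  rw [ordx, ordx]
  have : {S : PT | (-u).1 S ≠ 0} = {S : PT | u.1 S ≠ 0} := by ext S; simp
  rw [this]

lemma normx_neg (u : PSer K) : normx (-u) = normx u := by
  rw [normx, normx, ordx_neg]

end Norms

section Exist

variable (g h : PSer K)

lemma ordx_le_phi (hg : 1 ≤ ordx g) (f : PSer K) : ordx f ≤ ordx (phi g h hg f) := by
  apply le_ordx
  intro T hT
  rw [phi_coeff] at hT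
  have : ∃ S, f.1 S * (subPT g h S).1 T ≠ 0 := by
    by_contra hc
    push_neg at hc
    exact hT (finsum_eq_zero_of_forall_eq_zero hc)
  obtain ⟨S, hS⟩ := this
  calc ordx f ≤ (degx S : ℕ∞) := ordx_le_degx f (left_ne_zero_of_mul hS)
    _ ≤ (degx T : ℕ∞) := by exact_mod_cast subPT_degx g h hg S T (right_ne_zero_of_mul hS)

lemma phi_isSubstHom (hg : 1 ≤ ordx g) : IsSubstHom g h (phi g h hg) where
  linear := phi_linear g h hg
  map_graft := fun fs _ => phi_graft g h hg fs
  map_one := by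
    rw [show onePS (K := K) = mono none from rfl, phi_mono]
    rfl
  map_X := by
    rw [show Xps (K := K) = mono (some (.leaf .vx)) from rfl, phi_mono, subPT_some, subT_leaf_x]
  map_Y := by
    rw [show Yps (K := K) = mono (some (.leaf .vy)) from rfl, phi_mono, subPT_some, subT_leaf_y]
  cont := by
    intro a ε hε
    refine ⟨ε, hε, fun b hb => ?_⟩
    have hsub : phi g h hg b - phi g h hg a = phi g h hg (b - a) :=
      ((IsLinearMap.mk' _ (phi_linear g h hg)).map_sub b a).symm
    show normx (phi g h hg b - phi g h hg a) < ε
    rw [hsub]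
    calc normx (phi g h hg (b - a)) ≤ normx (b - a) :=
          normx_anti (ordx_le_phi g h hg (b - a))
      _ < ε := hb

end Exist

section Uniq

def coeffHom (T : PT) : PSer K →+ K where
  toFun f := f.1 T
  map_zero' := rfl
  map_add' _ _ := rfl

lemma substHom_mono (g h : PSer K) {φ ψ : PSer K → PSer K}
    (hφ : IsSubstHom g h φ) (hψ : IsSubstHom g h ψ) :
    ∀ t : PTree, φ (mono (some t)) = ψ (mono (some t))
  | .leaf .vx => by
    rw [show mono (K := K) (some (.leaf .vx)) = Xps from rfl, hφ.map_X, hψ.map_X]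
  | .leaf .vy => by
    rw [show mono (K := K) (some (.leaf .vy)) = Yps from rfl, hφ.map_Y, hψ.map_Y]
  | .node a b r => by
    have hm : mono (K := K) (some (.node a b r))
        = bullet ((some a :: some b :: r.map some).map mono) := by
      rw [bullet_map_mono, graft_cons_cons]
    have hlen : 2 ≤ ((some a :: some b :: r.map some).map (mono (K := K))).length := by
      simp
    rw [hm, hφ.map_graft _ hlen, hψ.map_graft _ hlen]
    congr 1
    rw [List.map_map, List.map_map]
    apply List.map_congr_left
    intro x hx
    show φ (mono x) = ψ (mono x)
    rcases List.mem_cons.1 hx with rfl | hx'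
    · exact substHom_mono g h hφ hψ a
    rcases List.mem_cons.1 hx' with rfl | hx''
    · exact substHom_mono g h hφ hψ b
    · obtain ⟨c, hc, rfl⟩ := List.mem_map.1 hx''
      exact substHom_mono g h hφ hψ c
decreasing_by
  all_goals simp_wf
  · omega
  · omega
  · have := List.sizeOf_lt_of_mem hc
    omega

lemma substHom_monoPT (g h : PSer K) {φ ψ : PSer K → PSer K}
    (hφ : IsSubstHom g h φ) (hψ : IsSubstHom g h ψ) (S : PT) :
    φ (mono S) = ψ (mono S) := by
  cases S with
  | none => rw [show mono (K := K) none = onePS from rfl, hφ.map_one, hψ.map_one]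
  | some t => exact substHom_mono g h hφ hψ t

lemma eq_sum_mono (f' : PSer K) (E : Finset PT) (hE : ∀ S, f'.1 S ≠ 0 → S ∈ E) :
    f' = ∑ S ∈ E, f'.1 S • mono S := by
  classical
  apply Subtype.ext; funext T
  rw [show (∑ S ∈ E, f'.1 S • mono S).1 T = ∑ S ∈ E, (f'.1 S • mono (K := K) S).1 T from
    map_sum (coeffHom T) _ E]
  have hterm : ∀ S ∈ E, (f'.1 S • mono (K := K) S).1 T = if T = S then f'.1 S else 0 := by
    intro S _
    rw [smul_coeff, mono_coeff]
    by_cases hT : T = S <;> simp [hT]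
  rw [Finset.sum_congr rfl hterm, Finset.sum_ite_eq E T (fun S => f'.1 S)]
  by_cases hT : T ∈ E
  · rw [if_pos hT]
  · rw [if_neg hT]
    by_contra hc
    exact hT (hE T hc)

lemma substHom_finsupp (g h : PSer K) {φ ψ : PSer K → PSer K}
    (hφ : IsSubstHom g h φ) (hψ : IsSubstHom g h ψ) (f' : PSer K) (E : Finset PT)
    (hE : ∀ S, f'.1 S ≠ 0 → S ∈ E) : φ f' = ψ f' := by
  have hdecomp := eq_sum_mono f' E hE
  have hΦ : φ f' = ∑ S ∈ E, f'.1 S • φ (mono S) := by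
    conv_lhs => rw [hdecomp]
    rw [show φ (∑ S ∈ E, f'.1 S • mono S)
        = (IsLinearMap.mk' φ hφ.linear) (∑ S ∈ E, f'.1 S • mono S) from rfl, map_sum]
    apply Finset.sum_congr rfl
    intro S _
    rw [map_smul]
    rfl
  have hΨ : ψ f' = ∑ S ∈ E, f'.1 S • ψ (mono S) := by
    conv_lhs => rw [hdecomp]
    rw [show ψ (∑ S ∈ E, f'.1 S • mono S)
        = (IsLinearMap.mk' ψ hψ.linear) (∑ S ∈ E, f'.1 S • mono S) from rfl, map_sum]
    apply Finset.sum_congr rfl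
    intro S _
    rw [map_smul]
    rfl
  rw [hΦ, hΨ]
  apply Finset.sum_congr rfl
  intro S _
  rw [substHom_monoPT g h hφ hψ S]

lemma trunc_coeff (f : PSer K) (N : ℕ) (S : PT) :
    (∑ n ∈ Finset.range N, comp f n).1 S = if degx S < N then f.1 S else 0 := by
  classical
  rw [show (∑ n ∈ Finset.range N, comp f n).1 S = ∑ n ∈ Finset.range N, (comp f n).1 S from
    map_sum (coeffHom S) _ _]
  have hterm : ∀ n ∈ Finset.range N, (comp f n).1 S = if degx S = n then f.1 S else 0 := by
    intro n _
    rfl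
  rw [Finset.sum_congr rfl hterm, Finset.sum_ite_eq (Finset.range N) (degx S) (fun _ => f.1 S)]
  simp [Finset.mem_range]

lemma substHom_unique (g h : PSer K) {φ ψ : PSer K → PSer K}
    (hφ : IsSubstHom g h φ) (hψ : IsSubstHom g h ψ) : φ = ψ := by
  classical
  funext f
  have key : ∀ ε : ℝ, 0 < ε → normx (φ f - ψ f) < ε := by
    intro ε hε
    obtain ⟨δ₁, hδ₁, H₁⟩ := hφ.cont f ε hε
    obtain ⟨δ₂, hδ₂, H₂⟩ := hψ.cont f ε hε
    obtain ⟨N, hN⟩ : ∃ N : ℕ, ((2 : ℝ)⁻¹) ^ N < min δ₁ δ₂ :=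
      exists_pow_lt_of_lt_one (lt_min hδ₁ hδ₂) (by norm_num)
    set t := ∑ n ∈ Finset.range N, comp f n with htdef
    have hordtf : (N : ℕ∞) ≤ ordx (t - f) := by
      apply le_ordx
      intro S hS
      rw [sub_coeff, htdef, trunc_coeff] at hS
      by_cases hd : degx S < N
      · rw [if_pos hd] at hS
        simp at hS
      · push_neg at hd
        exact_mod_cast Nat.cast_le.2 hd
    have hnorm : normx (t - f) < min δ₁ δ₂ := lt_of_le_of_lt (normx_le_pow hordtf) hN
    have h1 := H₁ t (lt_of_lt_of_le hnorm (min_le_left _ _))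
    have h2 := H₂ t (lt_of_lt_of_le hnorm (min_le_right _ _))
    have hEfin : (⋃ k ∈ Set.Iic N, {S : PT | f.1 S ≠ 0 ∧ degx S = k}).Finite :=
      (Set.finite_Iic N).biUnion fun k _ => f.2 k
    have ht : φ t = ψ t := by
      apply substHom_finsupp g h hφ hψ t hEfin.toFinset
      intro S hS
      rw [htdef, trunc_coeff] at hS
      by_cases hd : degx S < N
      · rw [if_pos hd] at hS
        rw [Set.Finite.mem_toFinset]
        exact Set.mem_biUnion (Set.mem_Iic.2 (le_of_lt hd)) ⟨hS, rfl⟩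
      · rw [if_neg hd] at hS
        exact absurd rfl hS
    have hsplit : φ f - ψ f = (φ f - φ t) + (ψ t - ψ f) := by
      rw [ht]
      abel
    rw [hsplit]
    apply lt_of_le_of_lt (normx_add_le_max _ _)
    apply max_lt
    · rw [show φ f - φ t = -(φ t - φ f) by abel, normx_neg]
      exact h1
    · exact h2
  have hz : normx (φ f - ψ f) = 0 := by
    rcases lt_or_eq_of_le (normx_nonneg (φ f - ψ f)) with hlt | heq
    · exact absurd (key _ hlt) (lt_irrefl _)
    · exact heq.symm
  exact sub_eq_zero.1 (eq_zero_of_normx_eq_zero hz)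

end Uniq
end Planar


open Planar in
/-- For `g, h ∈ K{{x,y}` with `ord_x(g) ≥ 1` there is a unique `K`-linear,
grafting-compatible, unital, `x`-adically continuous map `φ : K{{x,y} → K{{x,y}` with
`φ(x) = g` and `φ(y) = h` (the substitution homomorphism `φ_{(g,h)}`). -/
theorem planar_substHom_exists_unique (K : Type) [Field K]
    (g h : PSer K) (hg : 1 ≤ ordx g) :
    ∃! φ : PSer K → PSer K, IsSubstHom g h φ :=
  ⟨phi g h hg, phi_isSubstHom g h hg, fun ψ hψ => substHom_unique g h hψ (phi_isSubstHom g h hg)⟩
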